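/- Let 0 < α < 1, h > 0, and g : [0,h] → ℝ continuous with g(0) = 0 and g α-Hölder continuous with constant L (i.e. |g(x)-g(y)| ≤ L|x-y|^α). Define w(x) := ∫₀ˣ ∑_{j} γ_j c_j t^(γ_j - 1) g(t) dt where each γ_j ≥ α. Then for a single term: if γ ≥ α and v(x) := ∫₀ˣ t^(γ-1) g(t) dt, then |v(y) - v(x)| ≤ C L (y-x)^(2α) for all 0 ≤ x < y ≤ h whenever 2α ≤ 1, with C depending only on α, γ, h. -/

import Mathlib

open Real

lemma rpow_sub_rpow_le (x y p : ℝ) (hx : 0 ≤ x) (hxy : x ≤ y) (hp0 : 0 ≤ p) (hp1 : p ≤ 1) :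
    y ^ p - x ^ p ≤ (y - x) ^ p := by
  have hyx : 0 ≤ y - x := sub_nonneg.2 hxy
  have h := NNReal.rpow_add_le_add_rpow x.toNNReal (y - x).toNNReal hp0 hp1
  have hsum : x.toNNReal + (y - x).toNNReal = y.toNNReal := by
    rw [← Real.toNNReal_add hx hyx]; ring_nf
  rw [hsum] at h
  have hc : (y.toNNReal : ℝ) ^ p ≤ (x.toNNReal : ℝ) ^ p + ((y - x).toNNReal : ℝ) ^ p := by
    have := NNReal.coe_le_coe.2 h
    push_cast at this
    simpa using this
  rw [Real.coe_toNNReal _ (hx.trans hxy), Real.coe_toNNReal _ hx, Real.coe_toNNReal _ hyx] at hc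
  linarith

theorem stmt8 (α γ h : ℝ) (hα0 : 0 < α) (hα1 : α < 1) (hh : 0 < h)
    (hγ : α ≤ γ) (h2α : 2 * α ≤ 1) :
    ∃ C > 0, ∀ (g : ℝ → ℝ) (L : ℝ),
      ContinuousOn g (Set.Icc 0 h) → g 0 = 0 →
      (∀ x ∈ Set.Icc (0 : ℝ) h, ∀ y ∈ Set.Icc (0 : ℝ) h, |g x - g y| ≤ L * |x - y| ^ α) →
      ∀ x y : ℝ, 0 ≤ x → x < y → y ≤ h →
        |(∫ t in (0 : ℝ)..y, t ^ (γ - 1) * g t) - ∫ t in (0 : ℝ)..x, t ^ (γ - 1) * g t| ≤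
          C * L * (y - x) ^ (2 * α) := by
  have hγ0 : 0 < γ := lt_of_lt_of_le hα0 hγ
  refine ⟨h ^ (γ - α) / (2 * α), by positivity, ?_⟩
  intro g L hgc hg0 hH x y hx hxy hyh
  have hy0 : 0 < y := lt_of_le_of_lt hx hxy
  have hL : 0 ≤ L := by
    have h1 := hH h ⟨hh.le, le_refl h⟩ 0 ⟨le_refl 0, hh.le⟩
    have hp : 0 < |h - (0:ℝ)| ^ α := by
      rw [sub_zero, abs_of_pos hh]; positivity
    nlinarith [abs_nonneg (g h - g 0)]
  have hgb : ∀ t ∈ Set.Icc (0:ℝ) h, |g t| ≤ L * t ^ α := by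
    intro t ht
    have h1 := hH t ht 0 ⟨le_refl 0, hh.le⟩
    rwa [hg0, sub_zero, sub_zero, abs_of_nonneg ht.1] at h1
  have hint : ∀ b : ℝ, 0 ≤ b → b ≤ h →
      IntervalIntegrable (fun t => t ^ (γ - 1) * g t) MeasureTheory.volume 0 b := by
    intro b hb0 hbh
    refine (intervalIntegral.intervalIntegrable_rpow' (by linarith)).mul_continuousOn
      (hgc.mono ?_)
    rw [Set.uIcc_of_le hb0]
    exact Set.Icc_subset_Icc le_rfl hbh
  rw [intervalIntegral.integral_interval_sub_left (hint y hy0.le hyh)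
    (hint x hx (hxy.le.trans hyh))]
  have key : ‖∫ t in x..y, t ^ (γ - 1) * g t‖ ≤
      |∫ t in x..y, L * h ^ (γ - α) * t ^ (2 * α - 1)| := by
    refine intervalIntegral.norm_integral_le_abs_of_norm_le ?_ ?_
    · refine (MeasureTheory.ae_restrict_iff' measurableSet_uIoc).2
        (Filter.Eventually.of_forall ?_)
      intro t ht
      rw [Set.uIoc_of_le hxy.le] at ht
      have ht0 : 0 < t := lt_of_le_of_lt hx ht.1
      have hth : t ≤ h := ht.2.trans hyh
      have h1 : ‖t ^ (γ - 1) * g t‖ ≤ t ^ (γ - 1) * (L * t ^ α) := by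
        rw [norm_mul, Real.norm_rpow_of_nonneg ht0.le, Real.norm_of_nonneg ht0.le]
        exact mul_le_mul_of_nonneg_left (hgb t ⟨ht0.le, hth⟩) (Real.rpow_nonneg ht0.le _)
      have h2 : t ^ (γ - 1) * (L * t ^ α) = L * (t ^ (γ - α) * t ^ (2 * α - 1)) := by
        rw [show t ^ (γ - 1) * (L * t ^ α) = L * (t ^ (γ - 1) * t ^ α) from by ring,
          ← Real.rpow_add ht0, ← Real.rpow_add ht0,
          show γ - 1 + α = γ - α + (2 * α - 1) from by ring]
      have h3 : t ^ (γ - α) ≤ h ^ (γ - α) :=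
        Real.rpow_le_rpow ht0.le hth (by linarith)
      calc ‖t ^ (γ - 1) * g t‖ ≤ L * (t ^ (γ - α) * t ^ (2 * α - 1)) := by rw [← h2]; exact h1
        _ ≤ L * h ^ (γ - α) * t ^ (2 * α - 1) := by
            rw [mul_assoc]
            refine mul_le_mul_of_nonneg_left ?_ hL
            exact mul_le_mul_of_nonneg_right h3 (Real.rpow_nonneg ht0.le _)
    · exact (intervalIntegral.intervalIntegrable_rpow' (by linarith)).const_mul _
  rw [Real.norm_eq_abs] at key
  refine key.trans ?_
  rw [intervalIntegral.integral_const_mul, integral_rpow (Or.inl (by linarith))]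
  have e1 : 2 * α - 1 + 1 = 2 * α := by ring
  rw [e1]
  have hxy2 : x ^ (2 * α) ≤ y ^ (2 * α) :=
    Real.rpow_le_rpow hx hxy.le (by linarith)
  have hsub : y ^ (2 * α) - x ^ (2 * α) ≤ (y - x) ^ (2 * α) :=
    rpow_sub_rpow_le x y (2 * α) hx hxy.le (by linarith) h2α
  have hsn : 0 ≤ y ^ (2 * α) - x ^ (2 * α) := sub_nonneg.2 hxy2
  have habs : |L * h ^ (γ - α) * ((y ^ (2 * α) - x ^ (2 * α)) / (2 * α))| =
      L * h ^ (γ - α) * ((y ^ (2 * α) - x ^ (2 * α)) / (2 * α)) := by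
    have h2 : 0 ≤ h ^ (γ - α) := Real.rpow_nonneg hh.le _
    apply abs_of_nonneg
    positivity
  rw [habs]
  have h2 : 0 ≤ h ^ (γ - α) := Real.rpow_nonneg hh.le _
  calc L * h ^ (γ - α) * ((y ^ (2 * α) - x ^ (2 * α)) / (2 * α))
      = L * h ^ (γ - α) / (2 * α) * (y ^ (2 * α) - x ^ (2 * α)) := by ring
    _ ≤ L * h ^ (γ - α) / (2 * α) * (y - x) ^ (2 * α) :=
        mul_le_mul_of_nonneg_left hsub (by positivity)
    _ = h ^ (γ - α) / (2 * α) * L * (y - x) ^ (2 * α) := by ring
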